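/- For all complex numbers x, y with |x| < 1/4 and |y| < 1/4, the double series Σ_{α=0}^{∞} Σ_{β=0}^{∞} (binomial(α+β, α))² x^α y^β converges and equals (1 − 2(x+y) + (x−y)²)^{−1/2}, where the principal branch of the square root is used. -/

import Mathlib

open Finset Complex

section CombLemmas

lemma twoB (n : ℕ) :
    2 * ∑ k ∈ Finset.range (n+1), (k : ℚ) * Nat.centralBinom k * Nat.centralBinom (n - k)
      = n * ∑ k ∈ Finset.range (n+1), (Nat.centralBinom k : ℚ) * Nat.centralBinom (n - k) := by
  have h : ∑ k ∈ Finset.range (n+1), (k : ℚ) * Nat.centralBinom k * Nat.centralBinom (n - k)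
      = ∑ k ∈ Finset.range (n+1),
          ((n - k : ℕ) : ℚ) * Nat.centralBinom (n - k) * Nat.centralBinom k := by
    rw [← Finset.sum_range_reflect]
    refine Finset.sum_congr rfl fun j hj => ?_
    simp only [Finset.mem_range] at hj
    have h1 : n + 1 - 1 - j = n - j := by omega
    have h2 : n - (n - j) = j := by omega
    rw [h1, h2]
  calc 2 * ∑ k ∈ Finset.range (n+1), (k : ℚ) * Nat.centralBinom k * Nat.centralBinom (n - k)
      = (∑ k ∈ Finset.range (n+1), (k : ℚ) * Nat.centralBinom k * Nat.centralBinom (n - k))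
        + ∑ k ∈ Finset.range (n+1),
            ((n - k : ℕ) : ℚ) * Nat.centralBinom (n - k) * Nat.centralBinom k := by
        rw [← h]; ring
    _ = ∑ k ∈ Finset.range (n+1),
          (((k : ℚ) + ((n - k : ℕ) : ℚ)) * Nat.centralBinom k * Nat.centralBinom (n - k)) := by
        rw [← Finset.sum_add_distrib]
        refine Finset.sum_congr rfl fun k hk => ?_
        ring
    _ = n * ∑ k ∈ Finset.range (n+1), (Nat.centralBinom k : ℚ) * Nat.centralBinom (n - k) := by
        rw [Finset.mul_sum]
        refine Finset.sum_congr rfl fun k hk => ?_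
        simp only [Finset.mem_range] at hk
        have : ((k : ℚ) + ((n - k : ℕ) : ℚ)) = n := by
          have : (n - k : ℕ) = n - k := rfl
          push_cast [Nat.cast_sub (by omega : k ≤ n)]
          ring
        rw [this]; ring

lemma conv_q (n : ℕ) :
    ∑ k ∈ Finset.range (n+1), (Nat.centralBinom k : ℚ) * Nat.centralBinom (n - k) = 4 ^ n := by
  induction n with
  | zero => simp [Nat.centralBinom]
  | succ n ih =>
    have hA : ∑ k ∈ Finset.range (n+2), (k : ℚ) * Nat.centralBinom k * Nat.centralBinom (n+1-k)
        = 4 * (∑ k ∈ Finset.range (n+1), (k : ℚ) * Nat.centralBinom k * Nat.centralBinom (n - k))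
          + 2 * ∑ k ∈ Finset.range (n+1), (Nat.centralBinom k : ℚ) * Nat.centralBinom (n - k) := by
      rw [Finset.sum_range_succ' (fun k => (k : ℚ) * Nat.centralBinom k * Nat.centralBinom (n+1-k)) (n+1)]
      simp only [Nat.cast_zero, zero_mul, add_zero]
      have : ∀ j ∈ Finset.range (n+1),
          ((j+1 : ℕ) : ℚ) * Nat.centralBinom (j+1) * Nat.centralBinom (n+1-(j+1))
          = (4 * (j : ℚ) + 2) * Nat.centralBinom j * Nat.centralBinom (n-j) := by
        intro j hj
        have hrec := Nat.succ_mul_centralBinom_succ j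
        have hrecq : ((j:ℚ)+1) * Nat.centralBinom (j+1) = 2 * (2*(j:ℚ)+1) * Nat.centralBinom j := by
          exact_mod_cast congrArg (Nat.cast : ℕ → ℚ) hrec
        have h1 : n + 1 - (j+1) = n - j := by omega
        rw [h1]
        push_cast
        calc ((j:ℚ)+1) * Nat.centralBinom (j+1) * Nat.centralBinom (n-j)
            = (2 * (2*(j:ℚ)+1) * Nat.centralBinom j) * Nat.centralBinom (n-j) := by rw [hrecq]
          _ = (4 * (j : ℚ) + 2) * Nat.centralBinom j * Nat.centralBinom (n-j) := by ring
      rw [Finset.sum_congr rfl this]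
      have split : ∀ k ∈ Finset.range (n+1),
          (4 * (k : ℚ) + 2) * Nat.centralBinom k * Nat.centralBinom (n-k)
            = 4 * ((k : ℚ) * Nat.centralBinom k * Nat.centralBinom (n - k))
              + 2 * ((Nat.centralBinom k : ℚ) * Nat.centralBinom (n - k)) := by
        intro k _; ring
      rw [Finset.sum_congr rfl split, Finset.sum_add_distrib, ← Finset.mul_sum, ← Finset.mul_sum]
    have h2A := twoB (n+1)
    have h2B := twoB n
    have hcancel : ((n:ℚ)+1) * (∑ k ∈ Finset.range (n+2), (Nat.centralBinom k : ℚ) * Nat.centralBinom (n+1-k))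
        = ((n:ℚ)+1) * (4 * ∑ k ∈ Finset.range (n+1), (Nat.centralBinom k : ℚ) * Nat.centralBinom (n-k)) := by
      have e1 : ((n:ℚ)+1) * (∑ k ∈ Finset.range (n+2), (Nat.centralBinom k : ℚ) * Nat.centralBinom (n+1-k))
          = 2 * ∑ k ∈ Finset.range (n+2), (k : ℚ) * Nat.centralBinom k * Nat.centralBinom (n+1-k) := by
        rw [h2A]; push_cast; ring
      rw [e1, hA]
      have e2 : 2 * (∑ k ∈ Finset.range (n+1), (k : ℚ) * Nat.centralBinom k * Nat.centralBinom (n - k))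
          = n * ∑ k ∈ Finset.range (n+1), (Nat.centralBinom k : ℚ) * Nat.centralBinom (n - k) := h2B
      ring_nf
      ring_nf at e2
      nlinarith [e2]
    have hne : ((n:ℚ)+1) ≠ 0 := by positivity
    have := mul_left_cancel₀ hne hcancel
    rw [this, ih]
    ring

section FactorialLemmas
open Nat

lemma vander (α β : ℕ) :
    ∑ m ∈ Finset.range (min α β + 1), α.choose m * β.choose m = (α+β).choose α := by
  have h : (α+β).choose β = ∑ k ∈ Finset.range (β+1), α.choose k * β.choose (β-k) := by
    rw [Nat.add_choose_eq, Finset.Nat.sum_antidiagonal_eq_sum_range_succ_mk]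
  have h2 : ∑ k ∈ Finset.range (β+1), α.choose k * β.choose (β-k)
      = ∑ k ∈ Finset.range (β+1), α.choose k * β.choose k := by
    refine Finset.sum_congr rfl fun k hk => ?_
    simp only [Finset.mem_range] at hk
    rw [Nat.choose_symm (by omega)]
  rw [Nat.choose_symm_add, h, h2]
  have hsub : Finset.range (min α β + 1) ⊆ Finset.range (β+1) :=
    Finset.range_subset_range.mpr (Nat.add_le_add_right (Nat.min_le_right α β) 1)
  refine Finset.sum_subset hsub fun k hk hk' => ?_
  simp only [Finset.mem_range] at hk hk'
  have hmin : min α β ≤ α := Nat.min_le_left α β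
  have hmin2 : min α β = α ∨ min α β = β := min_cases α β |>.imp (fun h => h.1) (fun h => h.1)
  have : α < k := by omega
  simp [Nat.choose_eq_zero_of_lt this]

set_option maxHeartbeats 1000000 in
lemma term_id (α β m : ℕ) (hmα : m ≤ α) (hmβ : m ≤ β) :
    (Nat.centralBinom m : ℂ) * ((α+β).choose (2*m)) * ((α+β-2*m).choose (α-m))
      = ((α+β).choose α) * (α.choose m) * (β.choose m) := by
  have s1 : 2*m - m = m := by omega
  have s2 : α+β-2*m - (α-m) = β-m := by omega
  have s3 : α+β-α = β := by omega
  have e1 : (Nat.centralBinom m : ℂ) = (2*m)! / (m ! * m !) := by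
    rw [Nat.centralBinom, Nat.cast_choose ℂ (by omega : m ≤ 2*m), s1]
  have e2 : (((α+β).choose (2*m) : ℕ) : ℂ) = (α+β)! / ((2*m)! * (α+β-2*m)!) :=
    Nat.cast_choose ℂ (by omega)
  have e3 : (((α+β-2*m).choose (α-m) : ℕ) : ℂ) = (α+β-2*m)! / ((α-m)! * (β-m)!) := by
    rw [Nat.cast_choose ℂ (by omega), s2]
  have e4 : (((α+β).choose α : ℕ) : ℂ) = (α+β)! / (α ! * β !) := by
    rw [Nat.cast_choose ℂ (by omega), s3]
  have e5 : ((α.choose m : ℕ) : ℂ) = α ! / (m ! * (α-m)!) := Nat.cast_choose ℂ hmα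
  have e6 : ((β.choose m : ℕ) : ℂ) = β ! / (m ! * (β-m)!) := Nat.cast_choose ℂ hmβ
  rw [e1, e2, e3, e4, e5, e6]
  have ne : ∀ k : ℕ, ((k ! : ℕ) : ℂ) ≠ 0 := fun k =>
    Nat.cast_ne_zero.mpr (Nat.factorial_ne_zero k)
  have combine : ∀ a1 a2 b1 b2 c1 c2 : ℂ, a1/a2 * (b1/b2) * (c1/c2) = a1*b1*c1/(a2*b2*c2) :=
    fun _ _ _ _ _ _ => by ring
  rw [combine, combine, div_eq_div_iff (by exact mul_ne_zero (mul_ne_zero (mul_ne_zero (ne _) (ne _)) (mul_ne_zero (ne _) (ne _))) (mul_ne_zero (ne _) (ne _))) (by exact mul_ne_zero (mul_ne_zero (mul_ne_zero (ne _) (ne _)) (mul_ne_zero (ne _) (ne _))) (mul_ne_zero (ne _) (ne _)))]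
  ring

lemma comb_c (α β : ℕ) (x y : ℂ) :
    ∑ m ∈ Finset.range (min α β + 1),
        (Nat.centralBinom m : ℂ) * ((α+β).choose (2*m)) * ((α+β-2*m).choose (α-m)) * x^α * y^β
      = (((α+β).choose α : ℂ))^2 * x^α * y^β := by
  have h : ∑ m ∈ Finset.range (min α β + 1),
        (Nat.centralBinom m : ℂ) * ((α+β).choose (2*m)) * ((α+β-2*m).choose (α-m))
      = (((α+β).choose α : ℂ))^2 := by
    have h1 : ∀ m ∈ Finset.range (min α β + 1),
        (Nat.centralBinom m : ℂ) * ((α+β).choose (2*m)) * ((α+β-2*m).choose (α-m))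
          = ((α+β).choose α) * ((α.choose m) * (β.choose m)) := by
      intro m hm
      simp only [Finset.mem_range] at hm
      rw [term_id α β m (by omega) (by omega)]
      ring
    rw [Finset.sum_congr rfl h1, ← Finset.mul_sum]
    have : ∑ m ∈ Finset.range (min α β + 1), ((α.choose m : ℂ) * (β.choose m))
        = (((α+β).choose α : ℕ) : ℂ) := by
      rw [← vander α β]
      push_cast
      rfl
    rw [this]
    ring
  rw [← Finset.sum_mul, ← Finset.sum_mul, h]

end FactorialLemmas

end CombLemmas

lemma conv_c (n : ℕ) :
    ∑ k ∈ Finset.range (n+1), (Nat.centralBinom k : ℂ) * Nat.centralBinom (n - k) = 4 ^ n := by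
  have := conv_q n
  have h2 := congrArg (Rat.cast : ℚ → ℂ) this
  push_cast at h2
  exact_mod_cast h2

lemma cb_le_four_pow (n : ℕ) : Nat.centralBinom n ≤ 4 ^ n := by
  calc Nat.centralBinom n = (2*n).choose n := rfl
    _ ≤ ∑ i ∈ Finset.range (2*n+1), (2*n).choose i :=
        Finset.single_le_sum (f := fun i => (2*n).choose i) (fun i _ => Nat.zero_le _)
          (Finset.mem_range.mpr (by omega))
    _ = 2 ^ (2*n) := Nat.sum_range_choose (2*n)
    _ = 4 ^ n := by rw [pow_mul]; norm_num

lemma summable_cb_norm {w : ℂ} (hw : ‖w‖ < 1) :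
    Summable (fun n => ‖(Nat.centralBinom n : ℂ) * (w/4)^n‖) := by
  refine Summable.of_nonneg_of_le (fun n => norm_nonneg _) (fun n => ?_)
    (summable_geometric_of_lt_one (norm_nonneg w) hw)
  have : ‖(Nat.centralBinom n : ℂ) * (w/4)^n‖
      = (Nat.centralBinom n : ℝ) * (‖w‖ / 4)^n := by
    rw [norm_mul, norm_pow]
    simp [Complex.norm_natCast]
  rw [this]
  calc (Nat.centralBinom n : ℝ) * (‖w‖ / 4)^n
      ≤ (4:ℝ)^n * (‖w‖ / 4)^n := by
        apply mul_le_mul_of_nonneg_right _ (by positivity)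
        exact_mod_cast Nat.cast_le.mpr (cb_le_four_pow n)
    _ = (‖w‖)^n := by
        rw [← mul_pow]
        congr 1
        field_simp
  -- goal : abs w ^ n ≤ abs w ^ n handled by calc end
  
lemma tsum_cb_sq {w : ℂ} (hw : ‖w‖ < 1) :
    (∑' n, (Nat.centralBinom n : ℂ) * (w/4)^n) * (∑' n, (Nat.centralBinom n : ℂ) * (w/4)^n)
      = (1 - w)⁻¹ := by
  have hs := summable_cb_norm hw
  have hC := hasSum_sum_range_mul_of_summable_norm hs hs
  have key : ∀ n, ∑ k ∈ Finset.range (n+1),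
      ((Nat.centralBinom k : ℂ) * (w/4)^k) * ((Nat.centralBinom (n-k) : ℂ) * (w/4)^(n-k))
        = w ^ n := by
    intro n
    have h1 : ∀ k ∈ Finset.range (n+1),
        ((Nat.centralBinom k : ℂ) * (w/4)^k) * ((Nat.centralBinom (n-k) : ℂ) * (w/4)^(n-k))
          = (Nat.centralBinom k : ℂ) * Nat.centralBinom (n-k) * (w/4)^n := by
      intro k hk
      simp only [Finset.mem_range] at hk
      rw [mul_mul_mul_comm, ← pow_add, show k + (n-k) = n by omega]
    rw [Finset.sum_congr rfl h1, ← Finset.sum_mul, conv_c n, div_pow]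
    field_simp
  rw [show (fun n => ∑ k ∈ Finset.range (n+1),
      ((Nat.centralBinom k : ℂ) * (w/4)^k) * ((Nat.centralBinom (n-k) : ℂ) * (w/4)^(n-k)))
      = fun n => w ^ n from funext key] at hC
  exact hC.unique (hasSum_geometric_of_norm_lt_one (by simpa using hw))

lemma one_sub_ne {w : ℂ} (hw : ‖w‖ < 1) : (1:ℂ) - w ≠ 0 := by
  intro h
  have : w = 1 := by linear_combination -h
  rw [this] at hw
  simp at hw

lemma cb_term_bound (n : ℕ) {w : ℂ} {r : ℝ} (h : ‖w‖ ≤ r) :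
    ‖(Nat.centralBinom n : ℂ) * (w/4)^n‖ ≤ r ^ n := by
  have hr : 0 ≤ r := le_trans (norm_nonneg w) h
  have : ‖(Nat.centralBinom n : ℂ) * (w/4)^n‖
      = (Nat.centralBinom n : ℝ) * (‖w‖ / 4)^n := by
    rw [norm_mul, norm_pow]
    simp [Complex.norm_natCast]
  rw [this]
  calc (Nat.centralBinom n : ℝ) * (‖w‖ / 4)^n
      ≤ (4:ℝ)^n * (r / 4)^n := by
        apply mul_le_mul
        · exact_mod_cast Nat.cast_le.mpr (cb_le_four_pow n)
        · exact pow_le_pow_left₀ (by positivity) (by linarith) n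
        · positivity
        · positivity
    _ = r^n := by rw [← mul_pow]; congr 1; field_simp

lemma aux_sq {w : ℂ} (hw : ‖w‖ < 1) :
    ((∑' n, (Nat.centralBinom n : ℂ) * (w/4)^n) * ((1 - w) ^ ((1/2:ℂ))))^2 = 1 := by
  have h1 : (1:ℂ) - w ≠ 0 := one_sub_ne hw
  have h2 : ((1 - w) ^ ((1/2:ℂ)))^2 = 1 - w := by
    rw [sq, ← Complex.cpow_add _ _ h1]
    norm_num
  calc ((∑' n, (Nat.centralBinom n : ℂ) * (w/4)^n) * ((1 - w) ^ ((1/2:ℂ))))^2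
      = ((∑' n, (Nat.centralBinom n : ℂ) * (w/4)^n) * (∑' n, (Nat.centralBinom n : ℂ) * (w/4)^n))
        * ((1 - w) ^ ((1/2:ℂ)))^2 := by ring
    _ = (1-w)⁻¹ * (1-w) := by rw [tsum_cb_sq hw, h2]
    _ = 1 := inv_mul_cancel₀ h1

lemma hasSum_centralBinom {z : ℂ} (hz : ‖z‖ < 1) :
    HasSum (fun n => (Nat.centralBinom n : ℂ) * (z/4)^n) ((1 - z) ^ (-(1/2 : ℂ))) := by
  have hsum : Summable (fun n => (Nat.centralBinom n : ℂ) * (z/4)^n) :=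
    (summable_cb_norm hz).of_norm
  have hhs : HasSum (fun n => (Nat.centralBinom n : ℂ) * (z/4)^n)
      (∑' n, (Nat.centralBinom n : ℂ) * (z/4)^n) := hsum.hasSum
  suffices hval : (∑' n, (Nat.centralBinom n : ℂ) * (z/4)^n) = (1 - z) ^ (-(1/2:ℂ)) by
    rwa [hval] at hhs
  set c : ℝ → ℝ := fun t => max 0 (min t 1) with hc
  have hc_cont : Continuous c := continuous_const.max (continuous_id.min continuous_const)
  have hc0 : ∀ t, 0 ≤ c t := fun t => le_max_left _ _
  have hc1 : ∀ t, c t ≤ 1 := fun t => max_le (by norm_num) (min_le_right _ _)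
  have hczero : c 0 = 0 := by norm_num [hc]
  have hcone : c 1 = 1 := by norm_num [hc]
  set F : ℝ → ℂ := fun t => (∑' n, (Nat.centralBinom n : ℂ) * (((c t : ℝ) : ℂ) * z / 4)^n)
      * ((1 - ((c t : ℝ) : ℂ) * z) ^ ((1/2:ℂ))) with hF
  have habs : ∀ t, ‖(((c t : ℝ) : ℂ) * z)‖ ≤ ‖z‖ := by
    intro t
    rw [norm_mul, Complex.norm_of_nonneg (hc0 t)]
    calc c t * ‖z‖ ≤ 1 * ‖z‖ :=
          mul_le_mul_of_nonneg_right (hc1 t) (norm_nonneg z)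
      _ = ‖z‖ := one_mul _
  have habs' : ∀ t, ‖(((c t : ℝ) : ℂ) * z)‖ < 1 := fun t => lt_of_le_of_lt (habs t) hz
  have hFsq : ∀ t, (F t)^2 = 1 := fun t => aux_sq (habs' t)
  have hdich : ∀ t, F t = 1 ∨ F t = -1 := by
    intro t
    have h' : (F t - 1) * (F t + 1) = 0 := by linear_combination hFsq t
    rcases mul_eq_zero.mp h' with h | h
    · left; linear_combination h
    · right; linear_combination h
  have hcont : Continuous F := by
    apply Continuous.mul
    · apply continuous_tsum (u := fun n => ‖z‖ ^ n)
      · intro n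
        apply Continuous.mul continuous_const
        apply Continuous.pow
        apply Continuous.div_const
        exact (Complex.continuous_ofReal.comp hc_cont).mul continuous_const
      · exact summable_geometric_of_lt_one (norm_nonneg z) hz
      · intro n t
        exact cb_term_bound n (habs t)
    · apply Continuous.cpow _ continuous_const
      · intro t
        refine Complex.mem_slitPlane_iff.mpr (Or.inl ?_)
        have h1 : (1 - ((c t : ℝ) : ℂ) * z).re = 1 - c t * z.re := by
          simp [Complex.sub_re, Complex.re_ofReal_mul]
        rw [h1]
        have h2 : c t * z.re ≤ ‖z‖ := by
          calc c t * z.re ≤ c t * |z.re| :=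
                mul_le_mul_of_nonneg_left (le_abs_self _) (hc0 t)
            _ ≤ 1 * |z.re| := mul_le_mul_of_nonneg_right (hc1 t) (abs_nonneg _)
            _ = |z.re| := one_mul _
            _ ≤ ‖z‖ := Complex.abs_re_le_norm z
        linarith
      · exact Continuous.sub continuous_const
          ((Complex.continuous_ofReal.comp hc_cont).mul continuous_const)
  have hF0 : F 0 = 1 := by
    rw [hF]
    simp only [hczero, Complex.ofReal_zero, zero_mul, sub_zero, Complex.one_cpow, mul_one,
      zero_div]
    rw [tsum_eq_single 0 (fun n hn => by simp [zero_pow hn])]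
    simp [Nat.centralBinom_zero]
  have hF1 : F 1 = (∑' n, (Nat.centralBinom n : ℂ) * (z/4)^n) * ((1 - z) ^ ((1/2:ℂ))) := by
    rw [hF]
    simp only [hcone, Complex.ofReal_one, one_mul]
  have hFone : F 1 = 1 := by
    by_contra hne
    have hFm1 : F 1 = -1 := (hdich 1).resolve_left hne
    have hφc : ContinuousOn (fun t => (F t).re) (Set.Icc (0:ℝ) 1) :=
      (Complex.continuous_re.comp hcont).continuousOn
    have iv := intermediate_value_Icc' (by norm_num : (0:ℝ) ≤ 1) hφc
    have hmem : (0:ℝ) ∈ Set.Icc ((F 1).re) ((F 0).re) := by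
      rw [hF0, hFm1]
      simp
    obtain ⟨t, ht, hφt⟩ := iv hmem
    simp only at hφt
    rcases hdich t with h | h <;> rw [h] at hφt <;> simp at hφt
  rw [hF1] at hFone
  have hBne : (1 - z) ^ ((1/2:ℂ)) ≠ 0 := by
    intro h
    rcases (Complex.cpow_eq_zero_iff _ _).mp h with ⟨h1, -⟩
    exact one_sub_ne hz h1
  have h := eq_inv_of_mul_eq_one_left (by rwa [mul_comm] at hFone)
  rw [Complex.cpow_neg, h, inv_inv]

lemma P2 {K : Type*} [RCLike K] (m : ℕ) {x y : K} (h : ‖x‖ + ‖y‖ < 1) :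
    HasSum (fun p : ℕ × ℕ =>
        ((p.1+p.2+2*m).choose (2*m) : K) * (((p.1+p.2).choose p.1 : ℕ) : K) * x^p.1 * y^p.2)
      (1 / (1 - (x+y))^(2*m+1)) := by
  have hx0 : (0:ℝ) ≤ ‖x‖ := norm_nonneg x
  have hy0 : (0:ℝ) ≤ ‖y‖ := norm_nonneg y
  set H : ℕ × ℕ → K := fun q =>
    if q.2 ≤ q.1 then ((q.1+2*m).choose (2*m) : K) * ((q.1.choose q.2 : ℕ) : K)
      * x^q.2 * y^(q.1-q.2) else 0 with hH
  have hnormH : ∀ q : ℕ × ℕ, ‖H q‖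
      = if q.2 ≤ q.1 then ((q.1+2*m).choose (2*m) : ℝ) * ((q.1.choose q.2 : ℕ) : ℝ)
          * ‖x‖^q.2 * ‖y‖^(q.1-q.2) else 0 := by
    rintro ⟨n, a⟩
    by_cases ha : a ≤ n
    · simp only [hH, if_pos ha, norm_mul, norm_pow, RCLike.norm_natCast]
    · simp only [hH, if_neg ha, norm_zero]
  have houter : ∀ n : ℕ, ∀ a ∉ Finset.range (n+1), H (n, a) = 0 := by
    intro n a ha
    simp only [Finset.mem_range] at ha
    simp only [hH, if_neg (by omega : ¬ a ≤ n)]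
  have hfibersum : ∀ n : ℕ, ∑ a ∈ Finset.range (n+1), ‖H (n, a)‖
      = ((n+2*m).choose (2*m) : ℝ) * (‖x‖ + ‖y‖)^n := by
    intro n
    rw [add_pow, Finset.mul_sum]
    refine Finset.sum_congr rfl fun a ha => ?_
    simp only [Finset.mem_range] at ha
    rw [hnormH, if_pos (by omega : a ≤ n)]
    ring
  have hnorm_summable : Summable fun q : ℕ × ℕ => ‖H q‖ := by
    refine (summable_prod_of_nonneg (fun q => norm_nonneg _)).mpr ⟨fun n => ?_, ?_⟩
    · exact summable_of_ne_finset_zero (s := Finset.range (n+1))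
        (fun a ha => by rw [houter n a ha, norm_zero])
    · have : ∀ n : ℕ, ∑' a, ‖H (n, a)‖ = ((n+2*m).choose (2*m) : ℝ) * (‖x‖ + ‖y‖)^n := by
        intro n
        rw [tsum_eq_sum (s := Finset.range (n+1)) (fun a ha => by rw [houter n a ha, norm_zero])]
        exact hfibersum n
      rw [funext this]
      have hr : ‖‖x‖ + ‖y‖‖ < 1 := by
        rw [Real.norm_eq_abs, _root_.abs_of_nonneg (by positivity)]; exact h
      exact summable_choose_mul_geometric_of_norm_lt_one (2*m) hr
  have hHsummable : Summable H := hnorm_summable.of_norm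
  have hHsum : HasSum H (∑' q, H q) := hHsummable.hasSum
  have hfibers : ∀ n : ℕ, HasSum (fun a => H (n, a))
      (((n+2*m).choose (2*m) : K) * (x+y)^n) := by
    intro n
    have h1 : HasSum (fun a => H (n, a)) (∑ a ∈ Finset.range (n+1), H (n, a)) :=
      hasSum_sum_of_ne_finset_zero (houter n)
    have h2 : ∑ a ∈ Finset.range (n+1), H (n, a)
        = ((n+2*m).choose (2*m) : K) * (x+y)^n := by
      rw [add_pow, Finset.mul_sum]
      refine Finset.sum_congr rfl fun a ha => ?_
      simp only [Finset.mem_range] at ha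
      rw [hH]
      simp only [if_pos (by omega : a ≤ n)]
      ring
    rwa [h2] at h1
  have hcoeff : HasSum (fun n => ((n+2*m).choose (2*m) : K) * (x+y)^n) (∑' q, H q) :=
    hHsum.prod_fiberwise hfibers
  have hxy : ‖x + y‖ < 1 := lt_of_le_of_lt (norm_add_le x y) h
  have hgeom := hasSum_choose_mul_geometric_of_norm_lt_one (2*m) hxy
  have hval : (∑' q, H q) = 1 / (1 - (x+y))^(2*m+1) := hcoeff.unique hgeom
  rw [hval] at hHsum
  set ι : ℕ × ℕ → ℕ × ℕ := fun p => (p.1 + p.2, p.1) with hι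
  have hinj : Function.Injective ι := by
    rintro ⟨a, b⟩ ⟨a', b'⟩ hab
    simp only [hι, Prod.mk.injEq] at hab
    have : a = a' := hab.2
    have : b = b' := by omega
    simp_all
  have hzero : ∀ q ∉ Set.range ι, H q = 0 := by
    rintro ⟨n, a⟩ hq
    by_cases ha : a ≤ n
    · exfalso
      refine hq ⟨(a, n - a), ?_⟩
      show (a + (n - a), a) = (n, a)
      rw [Prod.mk.injEq]
      constructor <;> omega
    · simp only [hH, if_neg ha]
  have hfinal : HasSum (H ∘ ι) (1 / (1 - (x+y))^(2*m+1)) :=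
    (hinj.hasSum_iff hzero).mpr hHsum
  have hcomp : (H ∘ ι) = fun p : ℕ × ℕ =>
      ((p.1+p.2+2*m).choose (2*m) : K) * (((p.1+p.2).choose p.1 : ℕ) : K) * x^p.1 * y^p.2 := by
    funext p
    have e : p.1 + p.2 - p.1 = p.2 := by omega
    simp only [Function.comp, hι, hH, if_pos (by omega : p.1 ≤ p.1 + p.2), e]
  rwa [hcomp] at hfinal

lemma branch {x y : ℂ} (hx : ‖x‖ < 1/4) (hy : ‖y‖ < 1/4) :
    (1 - (x+y))⁻¹ * ((1 - 4*x*y/(1-(x+y))^2) ^ (-(1/2:ℂ)))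
      = (1 - 2*(x+y) + (x-y)^2) ^ (-(1/2:ℂ)) := by
  have habs_sum : ‖(x+y)‖ < 1/2 :=
    lt_of_le_of_lt (norm_add_le x y) (by linarith)
  set c : ℂ := 1 - (x+y) with hcdef
  have hrec : 1/2 < c.re := by
    have h1 : c.re = 1 - (x+y).re := by simp [hcdef]
    have h2 : (x+y).re ≤ ‖(x+y)‖ := Complex.re_le_norm _
    rw [h1]; linarith
  have himc : |c.im| < 1/2 := by
    have h1 : c.im = -(x+y).im := by simp [hcdef]
    have h2 : |(x+y).im| ≤ ‖(x+y)‖ := Complex.abs_im_le_norm _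
    rw [h1, abs_neg]; linarith
  have hc0 : c ≠ 0 := by
    intro h
    rw [h] at hrec
    simp at hrec
    linarith
  have habsc : 1/2 < ‖c‖ := lt_of_lt_of_le hrec (Complex.re_le_norm c)
  set z : ℂ := 4*x*y/c^2 with hzdef
  have habz : ‖z‖ < 1 := by
    have h1 : ‖z‖ = 4 * ‖x‖ * ‖y‖ / (‖c‖)^2 := by
      rw [hzdef, norm_div, norm_pow]
      congr 1
      rw [norm_mul, norm_mul]
      norm_num
    have hxy16 : ‖x‖ * ‖y‖ < 1/16 := by
      nlinarith [norm_nonneg x, norm_nonneg y]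
    have hc2 : 1/4 < (‖c‖)^2 := by nlinarith
    rw [h1, div_lt_one (by positivity)]
    linarith
  set v : ℂ := 1 - z with hvdef
  have hrev : 0 < v.re := by
    have h1 : v.re = 1 - z.re := by simp [hvdef]
    have h2 : z.re ≤ ‖z‖ := Complex.re_le_norm _
    rw [h1]; linarith
  have hv0 : v ≠ 0 := by
    intro h
    rw [h] at hrev
    simp at hrev
  have hrec2 : 0 < (c^2).re := by
    have h1 : (c^2).re = c.re^2 - c.im^2 := by
      simp [sq, Complex.mul_re]
    have h3 : c.im^2 < 1/4 := by nlinarith [abs_nonneg c.im, _root_.sq_abs c.im]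
    nlinarith
  have hc20 : c^2 ≠ 0 := pow_ne_zero 2 hc0
  have hu : c^2 * v = 1 - 2*(x+y) + (x-y)^2 := by
    rw [hvdef, hzdef]
    field_simp
    rw [hcdef]
    ring
  have hπ := Real.pi_pos
  have harg2 : |Complex.arg (c^2)| < Real.pi/2 :=
    Complex.abs_arg_lt_pi_div_two_iff.mpr (Or.inl hrec2)
  have hargv : |Complex.arg v| < Real.pi/2 :=
    Complex.abs_arg_lt_pi_div_two_iff.mpr (Or.inl hrev)
  have hlog : Complex.log (c^2 * v) = Complex.log (c^2) + Complex.log v := by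
    apply Complex.log_mul hc20 hv0
    rcases abs_lt.mp harg2 with ⟨ha1, ha2⟩
    rcases abs_lt.mp hargv with ⟨hb1, hb2⟩
    constructor
    · linarith
    · linarith
  have hu0 : c^2 * v ≠ 0 := mul_ne_zero hc20 hv0
  have hsplit : (c^2 * v) ^ (-(1/2:ℂ)) = (c^2) ^ (-(1/2:ℂ)) * v ^ (-(1/2:ℂ)) := by
    rw [Complex.cpow_def_of_ne_zero hu0, Complex.cpow_def_of_ne_zero hc20,
      Complex.cpow_def_of_ne_zero hv0, hlog, add_mul, Complex.exp_add]
  have hsq : (c^2) ^ (-(1/2:ℂ)) = c⁻¹ := by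
    have harg : |Complex.arg c| < Real.pi/2 :=
      Complex.abs_arg_lt_pi_div_two_iff.mpr (Or.inl (by linarith))
    have him : (Complex.log c * 2).im = 2 * Complex.arg c := by
      simp [Complex.mul_im, Complex.log_im]
      ring
    rcases abs_lt.mp harg with ⟨ha1, ha2⟩
    have h1 : -Real.pi < (Complex.log c * 2).im := by rw [him]; linarith
    have h2 : (Complex.log c * 2).im ≤ Real.pi := by rw [him]; linarith
    have hmul := Complex.cpow_mul (x := c) (y := 2) (-(1/2:ℂ)) h1 h2
    rw [show (2:ℂ) * (-(1/2:ℂ)) = -1 by norm_num] at hmul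
    rw [Complex.cpow_neg_one, Complex.cpow_two] at hmul
    exact hmul.symm
  rw [← hu, hsplit, hsq]

/-- For `|x| < 1/4` and `|y| < 1/4`, the double series
`Σ_{α,β≥0} C(α+β,α)² x^α y^β` converges to `(1 - 2(x+y) + (x-y)²)^{-1/2}`
(principal branch of the square root / complex power). -/
theorem binomial_square_gen_fun (x y : ℂ)
    (hx : ‖x‖ < 1 / 4) (hy : ‖y‖ < 1 / 4) :
    HasSum
      (fun p : ℕ × ℕ =>
        ((Nat.choose (p.1 + p.2) p.1 : ℂ)) ^ 2 * x ^ p.1 * y ^ p.2)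
      ((1 - 2 * (x + y) + (x - y) ^ 2) ^ (-(1 / 2 : ℂ))) := by
  have hnx : ‖x‖ = ‖x‖ := rfl
  have hny : ‖y‖ = ‖y‖ := rfl
  have hx0 : (0:ℝ) ≤ ‖x‖ := norm_nonneg x
  have hy0 : (0:ℝ) ≤ ‖y‖ := norm_nonneg y
  have hx4 : ‖x‖ < 1/4 := by rw [hnx]; exact hx
  have hy4 : ‖y‖ < 1/4 := by rw [hny]; exact hy
  have hxy1 : ‖x‖ + ‖y‖ < 1 := by linarith
  have habs_sum : ‖(x+y)‖ < 1/2 :=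
    lt_of_le_of_lt (norm_add_le x y) (by rw [← hnx, ← hny]; linarith)
  have hc0 : (1:ℂ) - (x+y) ≠ 0 := by
    intro h
    have : x + y = 1 := by linear_combination -h
    rw [this] at habs_sum
    simp at habs_sum
    linarith
  -- the triple-indexed function
  set G : ℕ × (ℕ × ℕ) → ℂ := fun q =>
    (Nat.centralBinom q.1 : ℂ)
      * (((q.2.1+q.2.2+2*q.1).choose (2*q.1) : ℕ) : ℂ)
      * (((q.2.1+q.2.2).choose q.2.1 : ℕ) : ℂ)
      * x^(q.2.1+q.1) * y^(q.2.2+q.1) with hG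
  have hGnorm : ∀ (m : ℕ) (p : ℕ × ℕ), ‖G (m, p)‖
      = (Nat.centralBinom m : ℝ) * ‖x‖^m * ‖y‖^m
        * ((((p.1+p.2+2*m).choose (2*m) : ℕ) : ℝ) * (((p.1+p.2).choose p.1 : ℕ) : ℝ)
            * ‖x‖^p.1 * ‖y‖^p.2) := by
    intro m p
    simp only [hG, norm_mul, norm_pow, Complex.norm_natCast, pow_add]
    ring
  have hP2h : ‖(‖x‖ : ℝ)‖ + ‖(‖y‖ : ℝ)‖ < 1 := by rw [norm_norm, norm_norm]; exact hxy1
  have hP2R : ∀ m : ℕ, HasSum (fun p : ℕ × ℕ =>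
      (((p.1+p.2+2*m).choose (2*m) : ℕ) : ℝ) * (((p.1+p.2).choose p.1 : ℕ) : ℝ)
        * ‖x‖^p.1 * ‖y‖^p.2) (1 / (1 - (‖x‖+‖y‖))^(2*m+1)) := fun m => P2 m hP2h
  set d : ℝ := 1 - (‖x‖ + ‖y‖) with hd
  have hd2 : 1/2 < d := by rw [hd]; linarith
  have hd0 : 0 < d := by linarith
  have hxy16 : ‖x‖ * ‖y‖ < 1/16 := by nlinarith
  have hd4 : 1/4 < d^2 := by nlinarith
  set r : ℝ := 4 * (‖x‖ * ‖y‖) / d^2 with hr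
  have hr0 : 0 ≤ r := by positivity
  have hr1 : r < 1 := by
    rw [hr, div_lt_one (by positivity)]
    nlinarith
  -- summability of ‖G‖
  have hGnorm_summable : Summable (fun q => ‖G q‖) := by
    refine (summable_prod_of_nonneg (fun q => norm_nonneg _)).mpr ⟨fun m => ?_, ?_⟩
    · exact (((hP2R m).summable.mul_left
        ((Nat.centralBinom m : ℝ) * ‖x‖^m * ‖y‖^m)).congr
          (fun p => (hGnorm m p).symm))
    · have htsum : ∀ m : ℕ, ∑' p : ℕ × ℕ, ‖G (m, p)‖
          = (Nat.centralBinom m : ℝ) * ‖x‖^m * ‖y‖^m * (1 / d^(2*m+1)) := by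
        intro m
        rw [tsum_congr (hGnorm m), tsum_mul_left, (hP2R m).tsum_eq]
      rw [funext htsum]
      refine Summable.of_nonneg_of_le (fun m => by positivity) (fun m => ?_)
        ((summable_geometric_of_lt_one hr0 hr1).mul_left (1/d))
      have hcb : (Nat.centralBinom m : ℝ) ≤ 4^m := by
        exact_mod_cast Nat.cast_le.mpr (cb_le_four_pow m)
      have e1 : r^m = 4^m * (‖x‖^m * ‖y‖^m) / (d^2)^m := by
        rw [hr, div_pow, mul_pow, mul_pow]
      have e2 : (d^2)^m = d^(2*m) := (pow_mul d 2 m).symm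
      have e3 : d^(2*m+1) = d^(2*m) * d := pow_succ d (2*m)
      calc (Nat.centralBinom m : ℝ) * ‖x‖^m * ‖y‖^m * (1 / d^(2*m+1))
          = (Nat.centralBinom m : ℝ) * (‖x‖^m * ‖y‖^m * (1 / d^(2*m+1))) := by ring
        _ ≤ 4^m * (‖x‖^m * ‖y‖^m * (1 / d^(2*m+1))) :=
            mul_le_mul_of_nonneg_right hcb (by positivity)
        _ = 1/d * r^m := by
            rw [e1, e2, e3]
            field_simp
  have hGsummable : Summable G := hGnorm_summable.of_norm
  have hGhasSum : HasSum G (∑' q, G q) := hGsummable.hasSum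
  -- fiberwise over m : value of inner double sums
  have hfibC : ∀ m : ℕ, HasSum (fun p => G (m, p))
      ((Nat.centralBinom m : ℂ) * x^m * y^m * (1 / (1 - (x+y))^(2*m+1))) := by
    intro m
    have h := (P2 m hxy1).mul_left ((Nat.centralBinom m : ℂ) * x^m * y^m)
    have e : (fun p : ℕ × ℕ => ((Nat.centralBinom m : ℂ) * x^m * y^m)
        * ((((p.1+p.2+2*m).choose (2*m) : ℕ) : ℂ) * (((p.1+p.2).choose p.1 : ℕ) : ℂ)
            * x^p.1 * y^p.2)) = fun p => G (m, p) := by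
      funext p
      simp only [hG, pow_add]
      ring
    rw [← e]
    exact h
  have hsumI : HasSum (fun m => (Nat.centralBinom m : ℂ) * x^m * y^m
      * (1 / (1 - (x+y))^(2*m+1))) (∑' q, G q) := hGhasSum.prod_fiberwise hfibC
  -- identify the total sum using the binomial series
  have habsc : 1/2 < ‖(1 - (x+y))‖ := by
    have h2 : (1 - (x+y)).re = 1 - (x+y).re := by simp
    have h3 : (x+y).re ≤ ‖(x+y)‖ := Complex.re_le_norm _
    have : 1/2 < (1 - (x+y)).re := by rw [h2]; linarith
    exact lt_of_lt_of_le this (Complex.re_le_norm _)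
  have habz : ‖(4*x*y/(1-(x+y))^2)‖ < 1 := by
    have h1 : ‖(4*x*y/(1-(x+y))^2)‖
        = 4 * ‖x‖ * ‖y‖ / (‖(1-(x+y))‖)^2 := by
      rw [norm_div, norm_pow]
      congr 1
      rw [norm_mul, norm_mul]
      norm_num
    have hxy16' : ‖x‖ * ‖y‖ < 1/16 := by
      rw [← hnx, ← hny]; exact hxy16
    have hc2 : 1/4 < (‖(1-(x+y))‖)^2 := by nlinarith
    rw [h1, div_lt_one (by positivity)]
    rw [← hnx, ← hny] at hxy16' ⊢
    linarith
  have hbin := (hasSum_centralBinom habz).mul_left (1 - (x+y))⁻¹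
  have heq : (fun m => (1 - (x+y))⁻¹
      * ((Nat.centralBinom m : ℂ) * ((4*x*y/(1-(x+y))^2)/4)^m))
      = fun m => (Nat.centralBinom m : ℂ) * x^m * y^m * (1 / (1 - (x+y))^(2*m+1)) := by
    funext m
    have e1 : (4*x*y/(1-(x+y))^2)/4 = x*y/(1-(x+y))^2 := by ring
    have e2 : (x*y/(1-(x+y))^2)^m = x^m * y^m / ((1-(x+y))^2)^m := by
      rw [div_pow, mul_pow]
    have e3 : ((1-(x+y))^2)^m = (1-(x+y))^(2*m) := (pow_mul _ 2 m).symm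
    have e4 : (1-(x+y))^(2*m+1) = (1-(x+y))^(2*m) * (1-(x+y)) := pow_succ _ (2*m)
    rw [e1, e2, e3, e4]
    field_simp
  rw [heq] at hbin
  have hval : (∑' q, G q) = (1 - 2*(x+y) + (x-y)^2) ^ (-(1/2:ℂ)) := by
    rw [hsumI.unique hbin, branch hx hy]
  rw [hval] at hGhasSum
  -- regroup along (m, (a,b)) ↦ ((a+m, b+m), m)
  set H2 : (ℕ × ℕ) × ℕ → ℂ := fun q =>
    if q.2 ≤ min q.1.1 q.1.2 then
      (Nat.centralBinom q.2 : ℂ) * (((q.1.1+q.1.2).choose (2*q.2) : ℕ) : ℂ)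
        * (((q.1.1+q.1.2 - 2*q.2).choose (q.1.1 - q.2) : ℕ) : ℂ)
        * x^q.1.1 * y^q.1.2
    else 0 with hH2
  set ι2 : ℕ × (ℕ × ℕ) → (ℕ × ℕ) × ℕ := fun q => ((q.2.1+q.1, q.2.2+q.1), q.1) with hι2
  have hinj2 : Function.Injective ι2 := by
    rintro ⟨m, a, b⟩ ⟨m', a', b'⟩ h
    simp only [hι2, Prod.mk.injEq] at h
    obtain ⟨⟨h1, h2⟩, h3⟩ := h
    have ha : a = a' := by omega
    have hb : b = b' := by omega
    subst h3; subst ha; subst hb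
    rfl
  have hcomp2 : ∀ q, H2 (ι2 q) = G q := by
    rintro ⟨m, a, b⟩
    have hmin : m ≤ min (a+m) (b+m) := le_min (by omega) (by omega)
    show (if m ≤ min (a+m) (b+m) then
      (Nat.centralBinom m : ℂ) * (((a+m+(b+m)).choose (2*m) : ℕ) : ℂ)
        * (((a+m+(b+m) - 2*m).choose (a+m - m) : ℕ) : ℂ) * x^(a+m) * y^(b+m) else 0)
      = G (m, (a, b))
    rw [if_pos hmin]
    have e1 : a+m+(b+m) = a+b+2*m := by omega
    have e2 : a+b+2*m - 2*m = a+b := by omega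
    have e3 : a+m - m = a := by omega
    rw [e1, e2, e3]
  have hzero2 : ∀ q ∉ Set.range ι2, H2 q = 0 := by
    rintro ⟨⟨α, β⟩, m⟩ hq
    by_cases hm : m ≤ min α β
    · exfalso
      have hmα : m ≤ α := le_trans hm (min_le_left _ _)
      have hmβ : m ≤ β := le_trans hm (min_le_right _ _)
      refine hq ⟨(m, (α - m, β - m)), ?_⟩
      show ((α - m + m, β - m + m), m) = ((α, β), m)
      rw [Prod.mk.injEq, Prod.mk.injEq]
      refine ⟨⟨by omega, by omega⟩, rfl⟩
    · simp only [hH2, if_neg hm]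
  have hH2hasSum : HasSum H2 ((1 - 2*(x+y) + (x-y)^2) ^ (-(1/2:ℂ))) := by
    refine (hinj2.hasSum_iff hzero2).mp ?_
    rw [show (H2 ∘ ι2) = G from funext hcomp2]
    exact hGhasSum
  have hfib2 : ∀ p : ℕ × ℕ, HasSum (fun m => H2 (p, m))
      ((((p.1+p.2).choose p.1 : ℕ) : ℂ)^2 * x^p.1 * y^p.2) := by
    rintro ⟨α, β⟩
    have houter : ∀ m ∉ Finset.range (min α β + 1), H2 ((α, β), m) = 0 := by
      intro m hm
      simp only [Finset.mem_range] at hm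
      have : ¬ m ≤ min α β := by omega
      simp only [hH2, if_neg this]
    have h1 : HasSum (fun m => H2 ((α, β), m))
        (∑ m ∈ Finset.range (min α β + 1), H2 ((α, β), m)) :=
      hasSum_sum_of_ne_finset_zero houter
    have h2 : ∑ m ∈ Finset.range (min α β + 1), H2 ((α, β), m)
        = (((α+β).choose α : ℕ) : ℂ)^2 * x^α * y^β := by
      rw [← comb_c α β x y]
      refine Finset.sum_congr rfl fun m hm => ?_
      simp only [Finset.mem_range] at hm
      have : m ≤ min α β := by omega
      simp only [hH2, if_pos this]
    rwa [h2] at h1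
  have := hH2hasSum.prod_fiberwise hfib2
  exact this
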